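/- The map μ sending (V_1,…,V_{2n−1}) to (π_{h_1}^{−1}(V_1), …, π_{h_{2n−1}}^{−1}(V_{2n−1})), where each preimage π_{h_k}^{−1}(V_k) ⊆ U_{2n+h_k} is regarded as a subspace of W, is a bijection from F^{𝐢′}_{2n} onto the set of tuples (W_1,…,W_{2n−1}) of subspaces of W such that: dim W_k = ℓ_k for all 1 ≤ k ≤ 2n−1; W_k ⊆ W_{k+1} for 1 ≤ k ≤ 2n−2; and span{e_{j_p+1} : 1 ≤ p ≤ h_k} ⊆ W_k ⊆ span(e_1,…,e_{2n+h_k}) for all 1 ≤ k ≤ 2n−1. -/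
import Mathlib


open Module

/-- `V = ℂ^{2n}`, with the standard basis `v_1, …, v_{2n}` given (0-indexed) by the
coordinate functions. -/
abbrev Vs (n : ℕ) := Fin (2 * n) → ℂ

open scoped Classical in
/-- The projection `pr_K` killing the coordinates in `K` (0-indexed: the basis vector
`v_{a+1}` corresponds to the coordinate `a`). -/
noncomputable def prK (N : ℕ) (K : Set (Fin N)) : (Fin N → ℂ) →ₗ[ℂ] (Fin N → ℂ) where
  toFun x := fun a => if a ∈ K then 0 else x a
  map_add' x y := by funext a; by_cases h : a ∈ K <;> simp [h]
  map_smul' c x := by funext a; by_cases h : a ∈ K <;> simp [h]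

/-- The symplectic form `ω_V` on `V = ℂ^{2n}`: `ω_V(v_a, v_b) = 0` unless
`a + b = 2n + 1` (1-indexed) and `ω_V(v_i, v_{2n+1-i}) = 1` for `1 ≤ i ≤ n`. -/
noncomputable def omegaV (n : ℕ) : LinearMap.BilinForm ℂ (Vs n) :=
  LinearMap.mk₂ ℂ
    (fun x y => ∑ a : Fin (2 * n), (if (a : ℕ) < n then (1 : ℂ) else -1) * (x a * y a.rev))
    (fun x x' y => by simp [add_mul, mul_add, Finset.sum_add_distrib])
    (fun c x y => by simp [Finset.mul_sum, mul_assoc, mul_left_comm, mul_comm])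
    (fun x y y' => by simp [mul_add, Finset.sum_add_distrib])
    (fun c x y => by simp [Finset.mul_sum, mul_assoc, mul_left_comm, mul_comm])

/-- The structure maps of linear degenerations: `f_k = pr_{{k+1}}` (killing the basis
vector `v_{k+1}`, which is the 0-indexed coordinate `k`) if `k ∈ J`, the identity
otherwise. -/
noncomputable def fdeg (n : ℕ) (J : Finset ℕ) (k : ℕ) : Vs n →ₗ[ℂ] Vs n :=
  if k ∈ J then prK (2 * n) {a | (a : ℕ) = k} else LinearMap.id

/-- `𝐢′ = 𝐢 ∪ {2n-1-i : i ∈ 𝐢}`. -/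
def Iprime (n : ℕ) (I : Finset ℕ) : Finset ℕ := I ∪ I.image (fun i => 2 * n - 1 - i)

/-- The linear degenerate symplectic flag variety `SpF^𝐢_{2n}`, as a set of tuples
`(V_1, …, V_n)` of subspaces of `V = ℂ^{2n}` (the tuple entry of index `k : Fin n`
is `V_{k+1}`). -/
noncomputable def SpF (n : ℕ) (I : Finset ℕ) : Set (Fin n → Submodule ℂ (Vs n)) :=
  {Vt | (∀ k : Fin n, finrank ℂ ↥(Vt k) = k.1 + 1) ∧
    (∀ k : ℕ, ∀ hk : k + 1 < n,
      (Vt ⟨k, by omega⟩).map (fdeg n I (k + 1)) ≤ Vt ⟨k + 1, hk⟩) ∧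
    (∀ h : n - 1 < n, Vt ⟨n - 1, h⟩ = (omegaV n).orthogonal (Vt ⟨n - 1, h⟩))}

/-- The linear degenerate flag variety `F^{J}_{2n}` for `J ⊆ {1, …, 2n-1}`, as a set
of tuples `(V_1, …, V_{2n-1})` of subspaces of `V = ℂ^{2n}`. -/
noncomputable def Fpr (n : ℕ) (J : Finset ℕ) : Set (Fin (2 * n - 1) → Submodule ℂ (Vs n)) :=
  {Vt | (∀ k : Fin (2 * n - 1), finrank ℂ ↥(Vt k) = k.1 + 1) ∧
    (∀ k : ℕ, ∀ hk : k + 1 < 2 * n - 1,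
      (Vt ⟨k, by omega⟩).map (fdeg n J (k + 1)) ≤ Vt ⟨k + 1, hk⟩)}
/-- `W = ℂ^{2n+2t}` with standard basis `e_1, …, e_{2n+2t}` (0-indexed coordinates). -/
abbrev Ws (n t : ℕ) := Fin (2 * n + 2 * t) → ℂ

open scoped Classical in
/-- The index (0-based) of the basis vector of `W` whose image under `π_s` is
`v_{b+1}`: it is `e_{2n+p}` if `j p = b` for some `1 ≤ p ≤ s` (with `p ≤ 2t`), and
`e_{b+1}` otherwise. -/
noncomputable def cIdx (n t : ℕ) (j : ℕ → ℕ) (s : ℕ) (b : Fin (2 * n)) :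
    Fin (2 * n + 2 * t) :=
  if h : ∃ p, 1 ≤ p ∧ p ≤ s ∧ p ≤ 2 * t ∧ j p = (b : ℕ) then
    ⟨2 * n + Classical.choose h - 1, by have := Classical.choose_spec h; omega⟩
  else ⟨b.1, by have := b.isLt; omega⟩

/-- The map `π_s : W → V`, given on the basis by `π_s(e_a) = v_a` for
`a ∈ {1,…,2n} ∖ {j_1+1,…,j_s+1}`, `π_s(e_{j_p+1}) = 0` for `1 ≤ p ≤ s`,
`π_s(e_{2n+p}) = v_{j_p+1}` for `1 ≤ p ≤ s`, and `π_s(e_a) = 0` for `a > 2n+s`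
(so that its restriction to `U_{2n+s} = span(e_1,…,e_{2n+s})` is the map `π_s` of the
statement). -/
noncomputable def piW (n t : ℕ) (j : ℕ → ℕ) (s : ℕ) : Ws n t →ₗ[ℂ] Vs n where
  toFun x := fun b => x (cIdx n t j s b)
  map_add' x y := rfl
  map_smul' c x := rfl

/-- The subspace `U_{2n+s} = span(e_1, …, e_{2n+s})` of `W`. -/
noncomputable def UspanW (n t s : ℕ) : Submodule ℂ (Ws n t) :=
  ⨅ (a : Fin (2 * n + 2 * t)) (_ : 2 * n + s ≤ (a : ℕ)),
    LinearMap.ker (LinearMap.proj (R := ℂ) (φ := fun _ : Fin (2 * n + 2 * t) => ℂ) a)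

/-- The preimage `π_s^{-1}(V') ⊆ U_{2n+s}`, regarded as a subspace of `W`. -/
noncomputable def PreW (n t : ℕ) (j : ℕ → ℕ) (s : ℕ) (V' : Submodule ℂ (Vs n)) :
    Submodule ℂ (Ws n t) :=
  UspanW n t s ⊓ Submodule.comap (piW n t j s) V'
/-- the map `μ : (V_1,…,V_{2n-1}) ↦ (π_{h_1}^{-1}(V_1), …,
π_{h_{2n-1}}^{-1}(V_{2n-1}))` is a bijection from the linear degenerate flag variety
`F^{𝐢′}_{2n}` onto the set of tuples `(W_1,…,W_{2n-1})` of subspaces of `W` with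
`dim W_k = ℓ_k`, `W_k ⊆ W_{k+1}`, and
`span{e_{j_p+1} : 1 ≤ p ≤ h_k} ⊆ W_k ⊆ span(e_1,…,e_{2n+h_k})`.
Here `j` enumerates `𝐢′` and `ℓ` enumerates `{1,…,2n+2t} ∖ {j_1+1,…,j_{2t}+2t}`
(both strictly increasingly, given as hypotheses), and `h_k = ℓ_k - k`. -/


lemma aux_downset {N : ℕ} {g : ℕ → ℕ} (hg : ∀ p q, 1 ≤ p → p < q → q ≤ N → g p < g q)
    (X c : ℕ) (hc : ((Finset.Icc 1 N).filter (fun p => g p ≤ X)).card = c) :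
    ∀ p, 1 ≤ p → p ≤ N → (g p ≤ X ↔ p ≤ c) := by
  intro p hp1 hpN
  constructor
  · intro h
    by_contra hpc
    push_neg at hpc
    have hsub : Finset.Icc 1 p ⊆ (Finset.Icc 1 N).filter (fun p => g p ≤ X) := by
      intro q hq
      simp only [Finset.mem_Icc] at hq
      simp only [Finset.mem_filter, Finset.mem_Icc]
      refine ⟨⟨hq.1, le_trans hq.2 hpN⟩, ?_⟩
      rcases eq_or_lt_of_le hq.2 with rfl | hlt
      · exact h
      · exact le_of_lt (lt_of_lt_of_le (hg q p hq.1 hlt hpN) h)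
    have := Finset.card_le_card hsub
    rw [hc, Nat.card_Icc] at this
    omega
  · intro h
    by_contra hgx
    push_neg at hgx
    have hsub : (Finset.Icc 1 N).filter (fun p => g p ≤ X) ⊆ Finset.Icc 1 (p - 1) := by
      intro q hq
      simp only [Finset.mem_filter, Finset.mem_Icc] at hq
      simp only [Finset.mem_Icc]
      refine ⟨hq.1.1, ?_⟩
      by_contra hqp
      push_neg at hqp
      have hpq : p ≤ q := by omega
      rcases eq_or_lt_of_le hpq with rfl | hlt
      · omega
      · have := hg p q hp1 hlt hq.1.2
        omega
    have := Finset.card_le_card hsub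
    rw [hc, Nat.card_Icc] at this
    omega

lemma aux_count (N : ℕ) (g : ℕ → ℕ)
    (hg : ∀ p q, 1 ≤ p → p < q → q ≤ N → g p < g q)
    (κ : ℕ) (hκ1 : 1 ≤ κ) (hκN : κ ≤ N) :
    (((Finset.Icc 1 N).image g).filter (· ≤ g κ)).card = κ := by
  have h1 : ((Finset.Icc 1 N).image g).filter (· ≤ g κ) = (Finset.Icc 1 κ).image g := by
    ext x
    simp only [Finset.mem_filter, Finset.mem_image, Finset.mem_Icc]
    constructor
    · rintro ⟨⟨q, ⟨hq1, hqN⟩, rfl⟩, hle⟩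
      refine ⟨q, ⟨hq1, ?_⟩, rfl⟩
      by_contra hqκ
      exact absurd hle (not_le.mpr (hg κ q hκ1 (by omega) hqN))
    · rintro ⟨q, ⟨hq1, hqκ⟩, rfl⟩
      refine ⟨⟨q, ⟨hq1, by omega⟩, rfl⟩, ?_⟩
      rcases eq_or_lt_of_le hqκ with rfl | h
      · exact le_rfl
      · exact le_of_lt (hg q κ hq1 h hκN)
  rw [h1, Finset.card_image_of_injOn, Nat.card_Icc]
  · omega
  intro a ha b hb hab
  simp only [Finset.mem_coe, Finset.mem_Icc] at ha hb
  by_contra hne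
  rcases lt_or_gt_of_ne hne with h | h
  · exact absurd hab (ne_of_lt (hg a b ha.1 h (le_trans hb.2 hκN)))
  · exact absurd hab.symm (ne_of_lt (hg b a hb.1 h (le_trans ha.2 hκN)))

lemma aux_key (n t : ℕ) (j l : ℕ → ℕ)
    (hjmono : ∀ p q, 1 ≤ p → p < q → q ≤ 2 * t → j p < j q)
    (hjb : ∀ p, 1 ≤ p → p ≤ 2 * t → 1 ≤ j p ∧ j p ≤ 2 * n - 2)
    (hn : 2 ≤ n)
    (hlmono : ∀ p q, 1 ≤ p → p < q → q ≤ 2 * n → l p < l q)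
    (hlim : ∀ x, (∃ k, 1 ≤ k ∧ k ≤ 2 * n ∧ l k = x) ↔
      (1 ≤ x ∧ x ≤ 2 * n + 2 * t ∧ ¬∃ p, 1 ≤ p ∧ p ≤ 2 * t ∧ x = j p + p)) :
    ∀ κ, 1 ≤ κ → κ ≤ 2 * n →
      l κ = κ + ((Finset.Icc 1 (2 * t)).filter (fun p => j p < κ)).card := by
  classical
  set m : ℕ → ℕ := fun p => j p + p with hm
  have hmmono : ∀ p q, 1 ≤ p → p < q → q ≤ 2 * t → m p < m q := by
    intro p q hp hpq hq
    have := hjmono p q hp hpq hq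
    simp only [hm]; omega
  set A : Finset ℕ := (Finset.Icc 1 (2 * n)).image l with hA
  set B : Finset ℕ := (Finset.Icc 1 (2 * t)).image m with hB
  -- basic bounds on l
  have hlb : ∀ κ, 1 ≤ κ → κ ≤ 2 * n → 1 ≤ l κ ∧ l κ ≤ 2 * n + 2 * t := by
    intro κ h1 h2
    have := (hlim (l κ)).mp ⟨κ, h1, h2, rfl⟩
    exact ⟨this.1, this.2.1⟩
  have hmb : ∀ p, 1 ≤ p → p ≤ 2 * t → 1 ≤ m p ∧ m p ≤ 2 * n + 2 * t := by
    intro p h1 h2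
    have := hjb p h1 h2
    simp only [hm]; omega
  -- disjointness: l κ ≠ m p
  have hne : ∀ κ, 1 ≤ κ → κ ≤ 2 * n → ∀ p, 1 ≤ p → p ≤ 2 * t → l κ ≠ m p := by
    intro κ h1 h2 p hp1 hp2 heq
    have := (hlim (l κ)).mp ⟨κ, h1, h2, rfl⟩
    exact this.2.2 ⟨p, hp1, hp2, heq⟩
  have hdisj : Disjoint A B := by
    rw [Finset.disjoint_left]
    rintro x hx hx'
    simp only [hA, hB, Finset.mem_image, Finset.mem_Icc] at hx hx'
    obtain ⟨κ, ⟨h1, h2⟩, rfl⟩ := hx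
    obtain ⟨p, ⟨hp1, hp2⟩, hp3⟩ := hx'
    exact hne κ h1 h2 p hp1 hp2 hp3.symm
  have hAcard : A.card = 2 * n := by
    rw [hA, Finset.card_image_of_injOn, Nat.card_Icc]
    · omega
    · intro a ha b hb hab
      simp only [Finset.mem_coe, Finset.mem_Icc] at ha hb
      by_contra hne'
      rcases lt_or_gt_of_ne hne' with h | h
      · exact absurd hab (ne_of_lt (hlmono a b ha.1 h hb.2))
      · exact absurd hab.symm (ne_of_lt (hlmono b a hb.1 h ha.2))
  have hBcard : B.card = 2 * t := by
    rw [hB, Finset.card_image_of_injOn, Nat.card_Icc]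
    · omega
    · intro a ha b hb hab
      simp only [Finset.mem_coe, Finset.mem_Icc] at ha hb
      by_contra hne'
      rcases lt_or_gt_of_ne hne' with h | h
      · exact absurd hab (ne_of_lt (hmmono a b ha.1 h hb.2))
      · exact absurd hab.symm (ne_of_lt (hmmono b a hb.1 h ha.2))
  have hcover : A ∪ B = Finset.Icc 1 (2 * n + 2 * t) := by
    apply Finset.eq_of_subset_of_card_le
    · intro x hx
      simp only [Finset.mem_union, hA, hB, Finset.mem_image, Finset.mem_Icc] at hx
      rcases hx with ⟨κ, ⟨h1, h2⟩, rfl⟩ | ⟨p, ⟨h1, h2⟩, rfl⟩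
      · exact Finset.mem_Icc.mpr (hlb κ h1 h2)
      · exact Finset.mem_Icc.mpr (hmb p h1 h2)
    · rw [Finset.card_union_of_disjoint hdisj, hAcard, hBcard, Nat.card_Icc]
      omega
  -- main counting identity: for any x in [1, 2n+2t],
  -- x = #(A ≤ x) + #(B ≤ x)
  have hcount : ∀ x, 1 ≤ x → x ≤ 2 * n + 2 * t →
      x = (A.filter (· ≤ x)).card + (B.filter (· ≤ x)).card := by
    intro x h1 h2
    have : Finset.Icc 1 x = (A.filter (· ≤ x)) ∪ (B.filter (· ≤ x)) := by
      rw [← Finset.filter_union]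
      rw [hcover]
      ext y
      simp only [Finset.mem_Icc, Finset.mem_filter]
      omega
    have hd : Disjoint (A.filter (· ≤ x)) (B.filter (· ≤ x)) :=
      hdisj.mono (Finset.filter_subset _ _) (Finset.filter_subset _ _)
    calc x = (Finset.Icc 1 x).card := by rw [Nat.card_Icc]; omega
    _ = _ := by rw [this, Finset.card_union_of_disjoint hd]
  -- for p in [1,2t] : #(A ≤ m p) = j p
  have hAm : ∀ p, 1 ≤ p → p ≤ 2 * t →
      ((Finset.Icc 1 (2 * n)).filter (fun κ' => l κ' ≤ m p)).card = j p := by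
    intro p hp1 hp2
    have h1 := hcount (m p) (hmb p hp1 hp2).1 (hmb p hp1 hp2).2
    have h2 : (B.filter (· ≤ m p)).card = p := aux_count (2 * t) m hmmono p hp1 hp2
    have h3 : (A.filter (· ≤ m p)).card =
        ((Finset.Icc 1 (2 * n)).filter (fun κ' => l κ' ≤ m p)).card := by
      rw [hA, Finset.filter_image, Finset.card_image_of_injOn]
      intro a ha b hb hab
      simp only [Finset.coe_filter, Set.mem_setOf_eq, Finset.mem_Icc] at ha hb
      by_contra hne'
      rcases lt_or_gt_of_ne hne' with h | h
      · exact absurd hab (ne_of_lt (hlmono a b ha.1.1 h hb.1.2))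
      · exact absurd hab.symm (ne_of_lt (hlmono b a hb.1.1 h ha.1.2))
    simp only [hm] at h1 h2 h3 ⊢
    omega
  -- hence: for κ in [1,2n], p in [1,2t] : l κ ≤ m p ↔ κ ≤ j p
  have hlm : ∀ κ, 1 ≤ κ → κ ≤ 2 * n → ∀ p, 1 ≤ p → p ≤ 2 * t →
      (l κ ≤ m p ↔ κ ≤ j p) := by
    intro κ h1 h2 p hp1 hp2
    exact aux_downset hlmono (m p) (j p) (hAm p hp1 hp2) κ h1 h2
  intro κ h1 h2
  have hkey := hcount (l κ) (hlb κ h1 h2).1 (hlb κ h1 h2).2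
  have hAl : (A.filter (· ≤ l κ)).card = κ := by
    rw [hA]; exact aux_count (2 * n) l hlmono κ h1 h2
  have hBl : (B.filter (· ≤ l κ)).card =
      ((Finset.Icc 1 (2 * t)).filter (fun p => j p < κ)).card := by
    rw [hB, Finset.filter_image, Finset.card_image_of_injOn]
    · congr 1
      apply Finset.filter_congr
      intro p hp
      simp only [Finset.mem_Icc] at hp
      have h3 := hlm κ h1 h2 p hp.1 hp.2
      have h4 := hne κ h1 h2 p hp.1 hp.2
      show m p ≤ l κ ↔ j p < κ
      constructor
      · intro hmp
        by_contra hjκ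
        push_neg at hjκ
        have : l κ ≤ m p := h3.mpr hjκ
        omega
      · intro hjκ
        have : ¬ (l κ ≤ m p) := fun hc => by have := h3.mp hc; omega
        omega
    · intro a ha b hb hab
      simp only [Finset.coe_filter, Set.mem_setOf_eq, Finset.mem_Icc] at ha hb
      by_contra hne'
      rcases lt_or_gt_of_ne hne' with h | h
      · exact absurd hab (ne_of_lt (hmmono a b ha.1.1 h hb.1.2))
      · exact absurd hab.symm (ne_of_lt (hmmono b a hb.1.1 h ha.1.2))
  omega

section LA

variable {n t : ℕ} {j : ℕ → ℕ}

lemma mem_UspanW_iff (n t s : ℕ) (x : Ws n t) :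
    x ∈ UspanW n t s ↔ ∀ a : Fin (2 * n + 2 * t), 2 * n + s ≤ (a : ℕ) → x a = 0 := by
  simp [UspanW, Submodule.mem_iInf, LinearMap.mem_ker]

lemma piW_apply (s : ℕ) (x : Ws n t) (b : Fin (2 * n)) :
    piW n t j s x b = x (cIdx n t j s b) := rfl

lemma UspanW_mono (n t : ℕ) {s s' : ℕ} (h : s ≤ s') : UspanW n t s ≤ UspanW n t s' := by
  intro x hx
  rw [mem_UspanW_iff] at hx ⊢
  intro a ha
  exact hx a (by omega)

lemma cIdx_eq_self (s : ℕ) (b : Fin (2 * n))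
    (h : ¬∃ p, 1 ≤ p ∧ p ≤ s ∧ p ≤ 2 * t ∧ j p = (b : ℕ)) :
    (cIdx n t j s b : ℕ) = (b : ℕ) := by
  rw [cIdx, dif_neg h]

lemma cIdx_eq_new (s : ℕ)
    (Hjinj : ∀ p q, 1 ≤ p → p ≤ 2 * t → 1 ≤ q → q ≤ 2 * t → j p = j q → p = q)
    (b : Fin (2 * n)) (p : ℕ) (hp1 : 1 ≤ p) (hps : p ≤ s) (hpt : p ≤ 2 * t)
    (hjp : j p = (b : ℕ)) :
    (cIdx n t j s b : ℕ) = 2 * n + p - 1 := by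
  have h : ∃ q, 1 ≤ q ∧ q ≤ s ∧ q ≤ 2 * t ∧ j q = (b : ℕ) := ⟨p, hp1, hps, hpt, hjp⟩
  rw [cIdx, dif_pos h]
  obtain ⟨h1, h2, h3, h4⟩ := Classical.choose_spec h
  have : Classical.choose h = p := Hjinj _ _ h1 h3 hp1 hpt (by rw [h4, hjp])
  simp [this]

lemma cIdx_lt (s : ℕ) (hs : s ≤ 2 * t) (b : Fin (2 * n)) :
    (cIdx n t j s b : ℕ) < 2 * n + s := by
  rw [cIdx]
  split_ifs with h
  · obtain ⟨h1, h2, h3, _⟩ := Classical.choose_spec h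
    simp only []
    omega
  · have := b.isLt
    simp only []
    omega

lemma cIdx_inj (s : ℕ) : Function.Injective (cIdx n t j s) := by
  intro b1 b2 h
  rw [cIdx, cIdx] at h
  split_ifs at h with h1 h2 h2
  · obtain ⟨ha1, _, _, ha4⟩ := Classical.choose_spec h1
    obtain ⟨hb1, _, _, hb4⟩ := Classical.choose_spec h2
    have hv := congrArg Fin.val h
    simp only [] at hv
    have : Classical.choose h1 = Classical.choose h2 := by omega
    apply Fin.ext
    rw [← ha4, ← hb4, this]
  · have hv := congrArg Fin.val h
    simp only [] at hv
    obtain ⟨ha1, _, _, _⟩ := Classical.choose_spec h1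
    have := b2.isLt
    omega
  · have hv := congrArg Fin.val h
    simp only [] at hv
    obtain ⟨ha1, _, _, _⟩ := Classical.choose_spec h2
    have := b1.isLt
    omega
  · have hv := congrArg Fin.val h
    simp only [] at hv
    exact Fin.ext hv

end LA

section LA2

variable {n t : ℕ} {j : ℕ → ℕ}
variable (Hjb : ∀ p, 1 ≤ p → p ≤ 2 * t → 1 ≤ j p ∧ j p ≤ 2 * n - 2)
variable (Hjinj : ∀ p q, 1 ≤ p → p ≤ 2 * t → 1 ≤ q → q ≤ 2 * t → j p = j q → p = q)
variable (hn : 2 ≤ n)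

include Hjb Hjinj hn

lemma mem_ker_inf_U (s : ℕ) (hs : s ≤ 2 * t) (x : Ws n t) :
    (x ∈ UspanW n t s ∧ piW n t j s x = 0) ↔
      ∀ a : Fin (2 * n + 2 * t), (¬∃ p, 1 ≤ p ∧ p ≤ s ∧ (a : ℕ) = j p) → x a = 0 := by
  constructor
  · rintro ⟨hU, hker⟩ a ha
    rw [mem_UspanW_iff] at hU
    by_cases hbig : 2 * n + s ≤ (a : ℕ)
    · exact hU a hbig
    push_neg at hbig
    by_cases hsm : (a : ℕ) < 2 * n
    · -- a = cIdx b for b := a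
      set b : Fin (2 * n) := ⟨(a : ℕ), hsm⟩ with hb
      have hc : (cIdx n t j s b : ℕ) = (b : ℕ) := by
        apply cIdx_eq_self
        rintro ⟨p, hp1, hp2, hp3, hp4⟩
        exact ha ⟨p, hp1, hp2, hp4.symm⟩
      have : piW n t j s x b = 0 := by rw [hker]; rfl
      rw [piW_apply] at this
      rwa [show cIdx n t j s b = a from Fin.ext hc] at this
    · push_neg at hsm
      set p : ℕ := (a : ℕ) - 2 * n + 1 with hp
      have hp1 : 1 ≤ p := by omega
      have hps : p ≤ s := by omega
      have hpt : p ≤ 2 * t := by omega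
      have hjpb : j p < 2 * n := by have := Hjb p hp1 hpt; omega
      set b : Fin (2 * n) := ⟨j p, hjpb⟩ with hb
      have hc : (cIdx n t j s b : ℕ) = 2 * n + p - 1 :=
        cIdx_eq_new s Hjinj b p hp1 hps hpt rfl
      have : piW n t j s x b = 0 := by rw [hker]; rfl
      rw [piW_apply] at this
      rwa [show cIdx n t j s b = a from Fin.ext (by omega)] at this
  · intro hx
    constructor
    · rw [mem_UspanW_iff]
      intro a ha
      apply hx
      rintro ⟨p, hp1, hp2, hp3⟩
      have := Hjb p hp1 (le_trans hp2 hs)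
      omega
    · funext b
      rw [show (0 : Vs n) b = 0 from rfl, piW_apply]
      apply hx
      rintro ⟨p, hp1, hp2, hp3⟩
      -- cIdx b = j p : case analysis on cIdx
      by_cases h : ∃ q, 1 ≤ q ∧ q ≤ s ∧ q ≤ 2 * t ∧ j q = (b : ℕ)
      · obtain ⟨q, hq1, hq2, hq3, hq4⟩ := h
        have hc : (cIdx n t j s b : ℕ) = 2 * n + q - 1 :=
          cIdx_eq_new s Hjinj b q hq1 hq2 hq3 hq4
        have := Hjb p hp1 (le_trans hp2 hs)
        omega
      · have hc : (cIdx n t j s b : ℕ) = (b : ℕ) := cIdx_eq_self s b h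
        have : j p = (b : ℕ) := by omega
        exact h ⟨p, hp1, hp2, le_trans hp2 hs, this⟩

end LA2

open scoped Classical in
lemma finrank_coord {N : ℕ} (D : Finset (Fin N)) (P : Submodule ℂ (Fin N → ℂ))
    (hP : ∀ x, x ∈ P ↔ ∀ a, a ∉ D → x a = 0) : Module.finrank ℂ P = D.card := by
  classical
  let f : P →ₗ[ℂ] ({a : Fin N // a ∈ D} → ℂ) :=
    { toFun := fun x d => x.1 d
      map_add' := fun x y => rfl
      map_smul' := fun c x => rfl }
  have hbij : Function.Bijective f := by
    constructor
    · intro x y hxy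
      apply Subtype.ext
      funext a
      by_cases h : a ∈ D
      · exact congrFun hxy ⟨a, h⟩
      · rw [(hP x.1).mp x.2 a h, (hP y.1).mp y.2 a h]
    · intro y
      refine ⟨⟨fun a => if h : a ∈ D then y ⟨a, h⟩ else 0, ?_⟩, ?_⟩
      · rw [hP]
        intro a ha
        simp [ha]
      · funext d
        simp [f, d.2]
  rw [(LinearEquiv.ofBijective f hbij).finrank_eq]
  rw [Module.finrank_fintype_fun_eq_card]
  simp

section LA3

variable {n t : ℕ} {j : ℕ → ℕ}
variable (Hjb : ∀ p, 1 ≤ p → p ≤ 2 * t → 1 ≤ j p ∧ j p ≤ 2 * n - 2)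
variable (Hjinj : ∀ p q, 1 ≤ p → p ≤ 2 * t → 1 ≤ q → q ≤ 2 * t → j p = j q → p = q)
variable (hn : 2 ≤ n)

open scoped Classical in
/-- The coordinate set `D_s = {j_p : 1 ≤ p ≤ s}` (0-indexed coordinates in `W`). -/
noncomputable def Dset (n t : ℕ) (j : ℕ → ℕ) (s : ℕ) : Finset (Fin (2 * n + 2 * t)) :=
  Finset.univ.filter (fun a => ∃ p, 1 ≤ p ∧ p ≤ s ∧ (a : ℕ) = j p)

include Hjb Hjinj hn

lemma card_Dset (s : ℕ) (hs : s ≤ 2 * t) : (Dset n t j s).card = s := by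
  classical
  have := Finset.card_bij (s := Finset.Icc 1 s) (t := Dset n t j s)
    (i := fun p hp => (⟨j p, by
      have h1 : p ∈ Finset.Icc 1 s := hp
      rw [Finset.mem_Icc] at h1
      have := Hjb p h1.1 (le_trans h1.2 hs); omega⟩ : Fin (2 * n + 2 * t)))
    (hi := by
      intro p hp
      rw [Finset.mem_Icc] at hp
      simp only [Dset, Finset.mem_filter, Finset.mem_univ, true_and]
      exact ⟨p, hp.1, hp.2, rfl⟩)
    (i_inj := by
      intro p hp q hq heq
      rw [Finset.mem_Icc] at hp hq
      have : j p = j q := congrArg Fin.val heq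
      exact Hjinj p q hp.1 (le_trans hp.2 hs) hq.1 (le_trans hq.2 hs) this)
    (i_surj := by
      intro a ha
      simp only [Dset, Finset.mem_filter, Finset.mem_univ, true_and] at ha
      obtain ⟨p, hp1, hp2, hp3⟩ := ha
      exact ⟨p, Finset.mem_Icc.mpr ⟨hp1, hp2⟩, Fin.ext hp3.symm⟩)
  rw [← this, Nat.card_Icc]
  omega

end LA3

/-- The kernel subspace `K_s = ker π_s ⊓ U_{2n+s}`. -/
noncomputable def Ksub (n t : ℕ) (j : ℕ → ℕ) (s : ℕ) : Submodule ℂ (Ws n t) :=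
  LinearMap.ker (piW n t j s) ⊓ UspanW n t s

section LA4

variable {n t : ℕ} {j : ℕ → ℕ}
variable (Hjb : ∀ p, 1 ≤ p → p ≤ 2 * t → 1 ≤ j p ∧ j p ≤ 2 * n - 2)
variable (Hjinj : ∀ p q, 1 ≤ p → p ≤ 2 * t → 1 ≤ q → q ≤ 2 * t → j p = j q → p = q)
variable (hn : 2 ≤ n)

include Hjb Hjinj hn

lemma mem_Ksub_iff (s : ℕ) (hs : s ≤ 2 * t) (x : Ws n t) :
    x ∈ Ksub n t j s ↔ ∀ a, a ∉ Dset n t j s → x a = 0 := by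
  classical
  rw [show (x ∈ Ksub n t j s) ↔ (x ∈ UspanW n t s ∧ piW n t j s x = 0) by
    simp [Ksub, LinearMap.mem_ker, and_comm]]
  rw [mem_ker_inf_U Hjb Hjinj hn s hs x]
  apply forall_congr'
  intro a
  simp [Dset]

lemma finrank_Ksub (s : ℕ) (hs : s ≤ 2 * t) :
    Module.finrank ℂ (Ksub n t j s) = s := by
  rw [finrank_coord (Dset n t j s) _ (mem_Ksub_iff Hjb Hjinj hn s hs)]
  exact card_Dset Hjb Hjinj hn s hs

lemma Ksub_le (s : ℕ) (hs : s ≤ 2 * t) (W : Submodule ℂ (Ws n t))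
    (hK : ∀ p, 1 ≤ p → p ≤ s → ∀ a : Fin (2 * n + 2 * t), (a : ℕ) = j p →
      Pi.single a 1 ∈ W) :
    Ksub n t j s ≤ W := by
  classical
  intro y hy
  rw [mem_Ksub_iff Hjb Hjinj hn s hs] at hy
  rw [pi_eq_sum_univ y]
  apply Submodule.sum_mem
  intro a _
  by_cases h : a ∈ Dset n t j s
  · simp only [Dset, Finset.mem_filter, Finset.mem_univ, true_and] at h
    obtain ⟨p, hp1, hp2, hp3⟩ := h
    have hsingle : (fun j' => if a = j' then (1 : ℂ) else 0) = Pi.single a 1 := by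
      funext j'
      rw [Pi.single_apply]
      by_cases hj : a = j' <;> simp [hj, eq_comm]
    rw [hsingle]
    exact Submodule.smul_mem _ _ (hK p hp1 hp2 a hp3)
  · rw [hy a h, zero_smul]
    exact Submodule.zero_mem _

lemma single_mem_Ksub (s : ℕ) (hs : s ≤ 2 * t) (p : ℕ) (hp1 : 1 ≤ p) (hp2 : p ≤ s)
    (a : Fin (2 * n + 2 * t)) (ha : (a : ℕ) = j p) :
    Pi.single a 1 ∈ Ksub n t j s := by
  classical
  rw [mem_Ksub_iff Hjb Hjinj hn s hs]
  intro a' ha'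
  apply Pi.single_eq_of_ne
  rintro rfl
  refine ha' ?_
  simp only [Dset, Finset.mem_filter, Finset.mem_univ, true_and]
  exact ⟨p, hp1, hp2, ha⟩

end LA4

lemma piW_surj_on_U {n t : ℕ} {j : ℕ → ℕ} (s : ℕ) (hs : s ≤ 2 * t) (v : Vs n) :
    ∃ x, x ∈ UspanW n t s ∧ piW n t j s x = v := by
  classical
  refine ⟨fun a => if h : ∃ b, cIdx n t j s b = a then v (Classical.choose h) else 0, ?_, ?_⟩
  · rw [mem_UspanW_iff]
    intro a ha
    rw [dif_neg]
    rintro ⟨b, rfl⟩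
    have := cIdx_lt (j := j) s hs b
    omega
  · funext b
    rw [piW_apply]
    have hex : ∃ b', cIdx n t j s b' = cIdx n t j s b := ⟨b, rfl⟩
    rw [dif_pos hex]
    congr 1
    exact cIdx_inj s (Classical.choose_spec hex)

section LA5

variable {n t : ℕ} {j : ℕ → ℕ}
variable (Hjb : ∀ p, 1 ≤ p → p ≤ 2 * t → 1 ≤ j p ∧ j p ≤ 2 * n - 2)
variable (Hjinj : ∀ p q, 1 ≤ p → p ≤ 2 * t → 1 ≤ q → q ≤ 2 * t → j p = j q → p = q)
variable (hn : 2 ≤ n)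

lemma map_PreW (s : ℕ) (hs : s ≤ 2 * t) (V' : Submodule ℂ (Vs n)) :
    Submodule.map (piW n t j s) (PreW n t j s V') = V' := by
  apply le_antisymm
  · rintro v ⟨x, ⟨hxU, hxV⟩, rfl⟩
    exact hxV
  · intro v hv
    obtain ⟨x, hxU, hx⟩ := piW_surj_on_U (j := j) s hs v
    refine ⟨x, Submodule.mem_inf.mpr ⟨hxU, ?_⟩, hx⟩
    rw [Submodule.mem_comap, hx]
    exact hv

include Hjb Hjinj hn

set_option synthInstance.maxHeartbeats 1000000 in
lemma finrank_sub_general (s : ℕ) (hs : s ≤ 2 * t) (P : Submodule ℂ (Ws n t))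
    (hPU : P ≤ UspanW n t s) (hPK : Ksub n t j s ≤ P) :
    Module.finrank ℂ P =
      Module.finrank ℂ (Submodule.map (piW n t j s) P) + s := by
  classical
  have h1 := LinearMap.finrank_range_add_finrank_ker ((piW n t j s).domRestrict P)
  rw [LinearMap.range_domRestrict] at h1
  have h2 : LinearMap.ker ((piW n t j s).domRestrict P) =
      Submodule.comap P.subtype (Ksub n t j s) := by
    rw [LinearMap.ker_domRestrict]
    apply le_antisymm
    · intro x hx
      simp only [Submodule.mem_comap, LinearMap.mem_ker] at hx ⊢
      constructor
      · exact hx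
      · exact hPU x.2
    · intro x hx
      simp only [Submodule.mem_comap, LinearMap.mem_ker, Ksub, Submodule.mem_inf] at hx ⊢
      exact hx.1
  have h3 : Module.finrank ℂ (LinearMap.ker ((piW n t j s).domRestrict P)) = s := by
    rw [h2, (Submodule.comapSubtypeEquivOfLe hPK).finrank_eq]
    exact finrank_Ksub Hjb Hjinj hn s hs
  rw [h3] at h1
  rw [← h1]

lemma finrank_PreW (s : ℕ) (hs : s ≤ 2 * t) (V' : Submodule ℂ (Vs n)) :
    Module.finrank ℂ (PreW n t j s V') = Module.finrank ℂ V' + s := by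
  have h := finrank_sub_general Hjb Hjinj hn s hs (PreW n t j s V')
    inf_le_left ?_
  · rw [map_PreW s hs] at h
    exact h
  · intro x hx
    simp only [Ksub, Submodule.mem_inf, LinearMap.mem_ker] at hx
    refine Submodule.mem_inf.mpr ⟨hx.2, ?_⟩
    rw [Submodule.mem_comap, hx.1]
    exact Submodule.zero_mem _

lemma PreW_map (s : ℕ) (hs : s ≤ 2 * t) (W : Submodule ℂ (Ws n t))
    (hWU : W ≤ UspanW n t s) (hWK : Ksub n t j s ≤ W) :
    PreW n t j s (Submodule.map (piW n t j s) W) = W := by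
  apply le_antisymm
  · intro x hx
    rw [PreW, Submodule.mem_inf, Submodule.mem_comap] at hx
    obtain ⟨hxU, hxV⟩ := hx
    obtain ⟨w, hw, hwx⟩ := Submodule.mem_map.mp hxV
    have : x - w ∈ Ksub n t j s := by
      simp only [Ksub, Submodule.mem_inf, LinearMap.mem_ker]
      constructor
      · rw [map_sub, hwx, sub_self]
      · exact Submodule.sub_mem _ hxU (hWU hw)
    have := hWK this
    have := Submodule.add_mem _ this hw
    rwa [sub_add_cancel] at this
  · intro x hx
    exact ⟨hWU hx, Submodule.mem_comap.mpr ⟨x, hx, rfl⟩⟩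

end LA5

section LA6

variable {n t : ℕ} {j : ℕ → ℕ}
variable (Hjb : ∀ p, 1 ≤ p → p ≤ 2 * t → 1 ≤ j p ∧ j p ≤ 2 * n - 2)
variable (Hjinj : ∀ p q, 1 ≤ p → p ≤ 2 * t → 1 ≤ q → q ≤ 2 * t → j p = j q → p = q)
variable (hn : 2 ≤ n)

include Hjb Hjinj hn

lemma piW_succ (s : ℕ) (hs : s + 1 ≤ 2 * t) (x : Ws n t) (hx : x ∈ UspanW n t s) :
    piW n t j (s + 1) x =
      prK (2 * n) {a | (a : ℕ) = j (s + 1)} (piW n t j s x) := by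
  classical
  funext b
  have hprK : prK (2 * n) {a | (a : ℕ) = j (s + 1)} (piW n t j s x) b =
      if (b : ℕ) = j (s + 1) then 0 else piW n t j s x b := by
    simp [prK]
  rw [hprK, piW_apply, piW_apply]
  by_cases hb : (b : ℕ) = j (s + 1)
  · rw [if_pos hb]
    have hc : (cIdx n t j (s + 1) b : ℕ) = 2 * n + (s + 1) - 1 :=
      cIdx_eq_new (s + 1) Hjinj b (s + 1) (by omega) le_rfl hs hb.symm
    rw [mem_UspanW_iff] at hx
    apply hx
    omega
  · rw [if_neg hb]
    congr 1
    apply Fin.ext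
    by_cases h : ∃ p, 1 ≤ p ∧ p ≤ s ∧ p ≤ 2 * t ∧ j p = (b : ℕ)
    · obtain ⟨p, hp1, hp2, hp3, hp4⟩ := h
      rw [cIdx_eq_new (s + 1) Hjinj b p hp1 (by omega) hp3 hp4,
        cIdx_eq_new s Hjinj b p hp1 hp2 hp3 hp4]
    · have h' : ¬∃ p, 1 ≤ p ∧ p ≤ s + 1 ∧ p ≤ 2 * t ∧ j p = (b : ℕ) := by
        rintro ⟨p, hp1, hp2, hp3, hp4⟩
        rcases Nat.lt_or_ge p (s + 1) with hlt | hge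
        · exact h ⟨p, hp1, by omega, hp3, hp4⟩
        · have : p = s + 1 := by omega
          subst this
          exact hb hp4.symm
      rw [cIdx_eq_self (s + 1) b h', cIdx_eq_self s b h]

end LA6
theorem mu_bijection_onto_schubert_cell_description (n t : ℕ) (hn : 2 ≤ n)
    (I : Finset ℕ) (hI : ∀ i ∈ I, 1 ≤ i ∧ i ≤ n - 1) (ht : I.card = t)
    (j : ℕ → ℕ)
    (hjmono : ∀ p q, 1 ≤ p → p < q → q ≤ 2 * t → j p < j q)
    (hjim : ∀ x, (∃ p, 1 ≤ p ∧ p ≤ 2 * t ∧ j p = x) ↔ x ∈ Iprime n I)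
    (l : ℕ → ℕ)
    (hlmono : ∀ p q, 1 ≤ p → p < q → q ≤ 2 * n → l p < l q)
    (hlim : ∀ x, (∃ k, 1 ≤ k ∧ k ≤ 2 * n ∧ l k = x) ↔
      (1 ≤ x ∧ x ≤ 2 * n + 2 * t ∧ ¬∃ p, 1 ≤ p ∧ p ≤ 2 * t ∧ x = j p + p)) :
    Set.BijOn
      (fun (Vt : Fin (2 * n - 1) → Submodule ℂ (Vs n)) (k : Fin (2 * n - 1)) =>
        PreW n t j (l (k.1 + 1) - (k.1 + 1)) (Vt k))
      (Fpr n (Iprime n I))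
      {Wt : Fin (2 * n - 1) → Submodule ℂ (Ws n t) |
        (∀ k : Fin (2 * n - 1), finrank ℂ ↥(Wt k) = l (k.1 + 1)) ∧
        (∀ k : ℕ, ∀ hk : k + 1 < 2 * n - 1, Wt ⟨k, by omega⟩ ≤ Wt ⟨k + 1, hk⟩) ∧
        (∀ k : Fin (2 * n - 1),
          Submodule.span ℂ {x : Ws n t | ∃ p, 1 ≤ p ∧ p ≤ l (k.1 + 1) - (k.1 + 1) ∧
            ∃ a : Fin (2 * n + 2 * t), (a : ℕ) = j p ∧ x = Pi.single a 1} ≤ Wt k) ∧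
        (∀ k : Fin (2 * n - 1), Wt k ≤ UspanW n t (l (k.1 + 1) - (k.1 + 1)))} := by
  classical
  -- basic bounds on j
  have hjb : ∀ p, 1 ≤ p → p ≤ 2 * t → 1 ≤ j p ∧ j p ≤ 2 * n - 2 := by
    intro p hp1 hp2
    have hmem : j p ∈ Iprime n I := (hjim (j p)).mp ⟨p, hp1, hp2, rfl⟩
    rw [Iprime, Finset.mem_union, Finset.mem_image] at hmem
    rcases hmem with h | ⟨i, hi, hieq⟩
    · have := hI _ h; omega
    · have := hI _ hi; omega
  have hjinj : ∀ p q, 1 ≤ p → p ≤ 2 * t → 1 ≤ q → q ≤ 2 * t → j p = j q → p = q := by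
    intro p q hp1 hp2 hq1 hq2 heq
    by_contra hne
    rcases lt_or_gt_of_ne hne with h | h
    · exact absurd heq (ne_of_lt (hjmono p q hp1 h hq2))
    · exact absurd heq.symm (ne_of_lt (hjmono q p hq1 h hp2))
  have key := aux_key n t j l hjmono hjb hn hlmono hlim
  set c : ℕ → ℕ := fun κ => ((Finset.Icc 1 (2 * t)).filter (fun p => j p < κ)).card with hcdef
  have hsc : ∀ κ, 1 ≤ κ → κ ≤ 2 * n → l κ - κ = c κ := by
    intro κ h1 h2
    rw [key κ h1 h2]
    simp only [hcdef]
    omega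
  have hcb : ∀ κ, c κ ≤ 2 * t := by
    intro κ
    calc c κ ≤ (Finset.Icc 1 (2 * t)).card := Finset.card_filter_le _ _
    _ = 2 * t := by rw [Nat.card_Icc]; omega
  have hF3 : ∀ κ, 1 ≤ κ → ∀ p, 1 ≤ p → p ≤ 2 * t → (j p < κ ↔ p ≤ c κ) := by
    intro κ hκ p hp1 hp2
    have hfilter : ((Finset.Icc 1 (2 * t)).filter (fun q => j q ≤ κ - 1)).card = c κ := by
      rw [hcdef]
      congr 1
      apply Finset.filter_congr
      intro q hq
      omega
    have := aux_downset hjmono (κ - 1) (c κ) hfilter p hp1 hp2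
    omega
  have hstep_out : ∀ κ, κ ∉ Iprime n I → c (κ + 1) = c κ := by
    intro κ hκ
    show ((Finset.Icc 1 (2 * t)).filter (fun q => j q < κ + 1)).card =
      ((Finset.Icc 1 (2 * t)).filter (fun q => j q < κ)).card
    congr 1
    apply Finset.filter_congr
    intro q hq
    simp only [Finset.mem_Icc] at hq
    constructor
    · intro h
      rcases Nat.lt_or_ge (j q) κ with h' | h'
      · exact h'
      · have : j q = κ := by omega
        exact absurd ((hjim κ).mp ⟨q, hq.1, hq.2, this⟩) hκ
    · omega
  have hstep_in : ∀ κ, 1 ≤ κ → κ ∈ Iprime n I →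
      c (κ + 1) = c κ + 1 ∧ j (c κ + 1) = κ := by
    intro κ hκ1 hκI
    obtain ⟨p0, hp01, hp02, hp0eq⟩ := (hjim κ).mpr hκI
    have hin : ((Finset.Icc 1 (2 * t)).filter (fun q => j q < κ + 1)) =
        insert p0 ((Finset.Icc 1 (2 * t)).filter (fun q => j q < κ)) := by
      ext q
      simp only [Finset.mem_insert, Finset.mem_filter, Finset.mem_Icc]
      constructor
      · rintro ⟨hq, hlt⟩
        rcases Nat.lt_or_ge (j q) κ with h' | h'
        · exact Or.inr ⟨hq, h'⟩
        · have : j q = κ := by omega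
          exact Or.inl (hjinj q p0 hq.1 hq.2 hp01 hp02 (by omega))
      · rintro (rfl | ⟨hq, hlt⟩)
        · exact ⟨⟨hp01, hp02⟩, by omega⟩
        · exact ⟨hq, by omega⟩
    have hnotin : p0 ∉ ((Finset.Icc 1 (2 * t)).filter (fun q => j q < κ)) := by
      simp only [Finset.mem_filter, Finset.mem_Icc]
      omega
    have hcstep : c (κ + 1) = c κ + 1 := by
      show ((Finset.Icc 1 (2 * t)).filter (fun q => j q < κ + 1)).card =
        ((Finset.Icc 1 (2 * t)).filter (fun q => j q < κ)).card + 1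
      rw [hin, Finset.card_insert_of_notMem hnotin]
    refine ⟨hcstep, ?_⟩
    have h1 : ¬ (p0 ≤ c κ) := fun hcon => by
      have := (hF3 κ hκ1 p0 hp01 hp02).mpr hcon
      omega
    have h2 : p0 ≤ c (κ + 1) := (hF3 (κ + 1) (by omega) p0 hp01 hp02).mp (by omega)
    have : p0 = c κ + 1 := by omega
    rw [← this, hp0eq]
  -- Ksub ≤ PreW
  have hKsubPre : ∀ s, ∀ V' : Submodule ℂ (Vs n), Ksub n t j s ≤ PreW n t j s V' := by
    intro s V' x hx
    simp only [Ksub, Submodule.mem_inf, LinearMap.mem_ker] at hx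
    refine Submodule.mem_inf.mpr ⟨hx.2, ?_⟩
    rw [Submodule.mem_comap, hx.1]
    exact Submodule.zero_mem _
  constructor
  · -- MapsTo
    intro Vt hVt
    obtain ⟨hdim, hmap⟩ := hVt
    refine ⟨?_, ?_, ?_, ?_⟩
    · -- dimensions
      intro k
      have hκ1 : 1 ≤ k.1 + 1 := by omega
      have hκn : k.1 + 1 ≤ 2 * n := by have := k.isLt; omega
      have hs : l (k.1 + 1) - (k.1 + 1) ≤ 2 * t := by
        rw [hsc _ hκ1 hκn]; exact hcb _
      rw [finrank_PreW hjb hjinj hn _ hs (Vt k), hdim k]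
      have := key (k.1 + 1) hκ1 hκn
      omega
    · -- inclusions
      intro k hk
      have hκ1 : 1 ≤ k + 1 := by omega
      have hκn : k + 1 ≤ 2 * n := by omega
      have hκn' : k + 2 ≤ 2 * n := by omega
      have hsk : l (k + 1) - (k + 1) = c (k + 1) := hsc _ hκ1 hκn
      have hsk' : l (k + 1 + 1) - (k + 1 + 1) = c (k + 1 + 1) :=
        hsc (k + 1 + 1) (by omega) (by omega)
      simp only []
      by_cases hκI : (k + 1) ∈ Iprime n I
      · obtain ⟨hc1, hc2⟩ := hstep_in (k + 1) hκ1 hκI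
        have hcb' := hcb (k + 1 + 1)
        have hseq : l (k + 1 + 1) - (k + 1 + 1) = (l (k + 1) - (k + 1)) + 1 := by omega
        rw [hseq]
        intro x hx
        rw [PreW, Submodule.mem_inf, Submodule.mem_comap] at hx
        obtain ⟨hxU, hxV⟩ := hx
        refine Submodule.mem_inf.mpr ⟨UspanW_mono n t (by omega) hxU, ?_⟩
        rw [Submodule.mem_comap]
        rw [piW_succ hjb hjinj hn _ (by omega) x hxU]
        have hjc : j ((l (k + 1) - (k + 1)) + 1) = k + 1 := by rw [hsk]; exact hc2
        rw [hjc]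
        have := hmap k hk
        rw [fdeg, if_pos hκI] at this
        exact this (Submodule.mem_map.mpr ⟨_, hxV, rfl⟩)
      · have := hstep_out (k + 1) hκI
        have hseq : l (k + 1 + 1) - (k + 1 + 1) = l (k + 1) - (k + 1) := by omega
        rw [hseq]
        have hVle : Vt ⟨k, by omega⟩ ≤ Vt ⟨k + 1, hk⟩ := by
          have := hmap k hk
          rw [fdeg, if_neg hκI] at this
          simpa using this
        exact inf_le_inf_left _ (Submodule.comap_mono hVle)
    · -- spans
      intro k
      rw [Submodule.span_le]
      rintro x ⟨p, hp1, hp2, a, ha, rfl⟩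
      have hκ1 : 1 ≤ k.1 + 1 := by omega
      have hκn : k.1 + 1 ≤ 2 * n := by have := k.isLt; omega
      have hs : l (k.1 + 1) - (k.1 + 1) ≤ 2 * t := by
        rw [hsc _ hκ1 hκn]; exact hcb _
      exact hKsubPre _ _ (single_mem_Ksub hjb hjinj hn _ hs p hp1 hp2 a ha)
    · intro k
      exact inf_le_left
  constructor
  · -- InjOn
    intro Vt hVt Vt' hVt' heq
    funext k
    have hκ1 : 1 ≤ k.1 + 1 := by omega
    have hκn : k.1 + 1 ≤ 2 * n := by have := k.isLt; omega
    have hs : l (k.1 + 1) - (k.1 + 1) ≤ 2 * t := by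
      rw [hsc _ hκ1 hκn]; exact hcb _
    have h1 := congrFun heq k
    simp only [] at h1
    have := congrArg (Submodule.map (piW n t j (l (k.1 + 1) - (k.1 + 1)))) h1
    rwa [map_PreW _ hs, map_PreW _ hs] at this
  · -- SurjOn
    intro Wt hWt
    obtain ⟨hdim, hmono, hspan, hUb⟩ := hWt
    have hsb : ∀ k : Fin (2 * n - 1), l (k.1 + 1) - (k.1 + 1) ≤ 2 * t := by
      intro k
      have hκ1 : 1 ≤ k.1 + 1 := by omega
      have hκn : k.1 + 1 ≤ 2 * n := by have := k.isLt; omega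
      rw [hsc _ hκ1 hκn]; exact hcb _
    have hWK : ∀ k : Fin (2 * n - 1),
        Ksub n t j (l (k.1 + 1) - (k.1 + 1)) ≤ Wt k := by
      intro k
      apply Ksub_le hjb hjinj hn _ (hsb k)
      intro p hp1 hp2 a ha
      apply hspan k
      apply Submodule.subset_span
      exact ⟨p, hp1, hp2, a, ha, rfl⟩
    refine ⟨fun k => Submodule.map (piW n t j (l (k.1 + 1) - (k.1 + 1))) (Wt k),
      ⟨?_, ?_⟩, ?_⟩
    · -- dimensions in Fpr
      intro k
      show Module.finrank ℂ
        ↥(Submodule.map (piW n t j (l (k.1 + 1) - (k.1 + 1))) (Wt k)) = k.1 + 1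
      have hκ1 : 1 ≤ k.1 + 1 := by omega
      have hκn : k.1 + 1 ≤ 2 * n := by have := k.isLt; omega
      have h1 := finrank_sub_general hjb hjinj hn _ (hsb k) (Wt k) (hUb k) (hWK k)
      rw [hdim k] at h1
      have h2 := key (k.1 + 1) hκ1 hκn
      have h3 := hsc (k.1 + 1) hκ1 hκn
      omega
    · -- flag condition in Fpr
      intro k hk
      have hκ1 : 1 ≤ k + 1 := by omega
      have hκn : k + 1 ≤ 2 * n := by omega
      have hsk : l (k + 1) - (k + 1) = c (k + 1) := hsc _ hκ1 hκn
      have hsk' : l (k + 1 + 1) - (k + 1 + 1) = c (k + 1 + 1) :=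
        hsc (k + 1 + 1) (by omega) (by omega)
      simp only []
      rintro v hv
      rw [Submodule.mem_map] at hv
      obtain ⟨w, hw, rfl⟩ := hv
      rw [Submodule.mem_map] at hw
      obtain ⟨x, hxW, rfl⟩ := hw
      by_cases hκI : (k + 1) ∈ Iprime n I
      · obtain ⟨hc1, hc2⟩ := hstep_in (k + 1) hκ1 hκI
        have hcb' := hcb (k + 1 + 1)
        have hseq : l (k + 1 + 1) - (k + 1 + 1) = (l (k + 1) - (k + 1)) + 1 := by omega
        rw [hseq]
        rw [fdeg, if_pos hκI]
        have hxU : x ∈ UspanW n t (l (k + 1) - (k + 1)) := hUb ⟨k, by omega⟩ hxW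
        have hpi := piW_succ hjb hjinj hn (l (k + 1) - (k + 1)) (by omega) x hxU
        have hjc : j ((l (k + 1) - (k + 1)) + 1) = k + 1 := by rw [hsk]; exact hc2
        rw [hjc] at hpi
        rw [← hpi]
        exact Submodule.mem_map.mpr ⟨x, hmono k hk hxW, rfl⟩
      · have := hstep_out (k + 1) hκI
        have hseq : l (k + 1 + 1) - (k + 1 + 1) = l (k + 1) - (k + 1) := by omega
        rw [hseq]
        rw [fdeg, if_neg hκI]
        simp only [LinearMap.id_coe, id_eq]
        exact Submodule.mem_map.mpr ⟨x, hmono k hk hxW, rfl⟩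
    · -- the image is Wt
      funext k
      simp only []
      exact PreW_map hjb hjinj hn _ (hsb k) (Wt k) (hUb k) (hWK k)
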